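/- Under a permutation-invariant (exchangeable in the K indices) joint distribution of (S, W, U_1,…,U_K, Y), for every nonempty subset A ⊆ {1,…,K}: (1/|A|)·I(U_A; Y, U_{K∖A} | S, W) ≥ (1/K)·I(U_{1..K}; Y | S, W). -/

import Mathlib

open scoped BigOperators Classical

/-- Shannon entropy (base 2) of a p.m.f. on a finite alphabet. -/
noncomputable def ent {α : Type*} [Fintype α] (p : α → ℝ) : ℝ :=
  -∑ a, p a * Real.logb 2 (p a)

/-- Distribution (pushforward p.m.f.) of a random variable `X` under `μ`. -/
noncomputable def pushf {Ω α : Type*} [Fintype Ω] (μ : Ω → ℝ) (X : Ω → α) : α → ℝ :=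
  fun a => ∑ ω ∈ Finset.univ.filter (fun ω => X ω = a), μ ω

/-- Shannon entropy of a random variable. -/
noncomputable def entRV {Ω α : Type*} [Fintype Ω] [Fintype α] (μ : Ω → ℝ) (X : Ω → α) : ℝ :=
  ent (pushf μ X)

/-- Conditional entropy `H(X|Z)`. -/
noncomputable def centRV {Ω α β : Type*} [Fintype Ω] [Fintype α] [Fintype β]
    (μ : Ω → ℝ) (X : Ω → α) (Z : Ω → β) : ℝ :=
  entRV μ (fun ω => (X ω, Z ω)) - entRV μ Z

/-- Mutual information `I(X;Y)`. -/
noncomputable def mi {Ω α β : Type*} [Fintype Ω] [Fintype α] [Fintype β]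
    (μ : Ω → ℝ) (X : Ω → α) (Y : Ω → β) : ℝ :=
  entRV μ X + entRV μ Y - entRV μ (fun ω => (X ω, Y ω))

/-- Conditional mutual information `I(X;Y|Z)`. -/
noncomputable def cmi {Ω α β γ : Type*} [Fintype Ω] [Fintype α] [Fintype β] [Fintype γ]
    (μ : Ω → ℝ) (X : Ω → α) (Y : Ω → β) (Z : Ω → γ) : ℝ :=
  centRV μ X Z + centRV μ Y Z - centRV μ (fun ω => (X ω, Y ω)) Z

/-- Kullback–Leibler divergence (base 2). -/
noncomputable def kl {α : Type*} [Fintype α] (p q : α → ℝ) : ℝ :=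
  ∑ a, p a * Real.logb 2 (p a / q a)

/-- `μ` is a probability mass function. -/
def IsPMF {Ω : Type*} [Fintype Ω] (μ : Ω → ℝ) : Prop :=
  (∀ ω, 0 ≤ μ ω) ∧ ∑ ω, μ ω = 1


set_option linter.unusedSectionVars false
set_option maxHeartbeats 1000000

section Basic
variable {Ω : Type*} [Fintype Ω] {A B C : Type*} [Fintype A] [Fintype B] [Fintype C]

lemma pushf_nonneg {μ : Ω → ℝ} (h : ∀ ω, 0 ≤ μ ω) (X : Ω → A) (a : A) : 0 ≤ pushf μ X a :=
  Finset.sum_nonneg fun ω _ => h ω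

lemma sum_pushf_mul [Fintype A] (μ : Ω → ℝ) (X : Ω → A) (F : A → ℝ) :
    ∑ a, pushf μ X a * F a = ∑ ω, μ ω * F (X ω) := by
  have h := Finset.sum_fiberwise_eq_sum_filter Finset.univ Finset.univ X (fun ω => μ ω * F (X ω))
  simp only [Finset.mem_univ, Finset.filter_true, Finset.filter_true_of_mem, fun _ _ => trivial] at h
  rw [← h]
  refine Finset.sum_congr rfl fun a _ => ?_
  rw [pushf, Finset.sum_mul]
  refine Finset.sum_congr rfl fun ω hω => ?_
  rw [(Finset.mem_filter.1 hω).2]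

lemma sum_pushf (μ : Ω → ℝ) (X : Ω → A) : ∑ a, pushf μ X a = ∑ ω, μ ω := by
  have := sum_pushf_mul μ X (fun _ => 1)
  simpa using this

lemma pushf_comp (μ : Ω → ℝ) (X : Ω → A) (g : A → B) :
    pushf μ (fun ω => g (X ω)) = pushf (pushf μ X) g := by
  funext b
  have h := Finset.sum_fiberwise_eq_sum_filter Finset.univ
      (Finset.univ.filter (fun a : A => g a = b)) X μ
  simp only [Finset.mem_filter, Finset.mem_univ, true_and] at h
  show _ = ∑ a ∈ Finset.univ.filter (fun a : A => g a = b), pushf μ X a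
  rw [pushf, ← h]
  rfl

end Basic

section Relabel
variable {Ω : Type*} [Fintype Ω] {A B : Type*} [Fintype A] [Fintype B]

lemma pushf_apply_inj (q : A → ℝ) {e : A → B} (he : Function.Injective e) (a : A) :
    pushf q e (e a) = q a := by
  have : Finset.univ.filter (fun a' => e a' = e a) = {a} := by
    ext a'; simp [he.eq_iff]
  rw [pushf, this, Finset.sum_singleton]

lemma pushf_apply_zero (q : A → ℝ) (e : A → B) (b : B) (hb : ∀ a, e a ≠ b) :
    pushf q e b = 0 := by
  rw [pushf, Finset.filter_false_of_mem (fun a _ => hb a), Finset.sum_empty]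

lemma ent_pushf_inj (q : A → ℝ) {e : A → B} (he : Function.Injective e) :
    ent (pushf q e) = ent q := by
  rw [ent, ent, neg_inj]
  have himg : ∑ b ∈ Finset.univ.image e, pushf q e b * Real.logb 2 (pushf q e b)
      = ∑ a : A, pushf q e (e a) * Real.logb 2 (pushf q e (e a)) :=
    Finset.sum_image (fun a _ a' _ h => he h)
  rw [← Finset.sum_subset (Finset.subset_univ (Finset.univ.image e))
      (fun b _ hb => by
        rw [pushf_apply_zero q e b
          (fun a h => hb (Finset.mem_image.2 ⟨a, Finset.mem_univ a, h⟩))]; simp),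
    himg]
  refine Finset.sum_congr rfl fun a _ => ?_
  rw [pushf_apply_inj q he]

lemma entRV_comp_inj (μ : Ω → ℝ) (X : Ω → A) {e : A → B} (he : Function.Injective e) :
    entRV μ (fun ω => e (X ω)) = entRV μ X := by
  rw [entRV, entRV, pushf_comp, ent_pushf_inj _ he]

lemma entRV_congr_inj (μ : Ω → ℝ) {X : Ω → A} {X' : Ω → B} {e : A → B}
    (he : Function.Injective e) (h : ∀ ω, e (X ω) = X' ω) :
    entRV μ X' = entRV μ X := by
  rw [show X' = fun ω => e (X ω) from (funext h).symm]
  exact entRV_comp_inj μ X he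

end Relabel

section Submod
variable {E A B C : Type*} [Fintype E] [Fintype A] [Fintype B] [Fintype C]

lemma ent_pushf_eq_sum (p : E → ℝ) (g : E → A) :
    ent (pushf p g) = -∑ t, p t * Real.logb 2 (pushf p g (g t)) := by
  rw [ent, sum_pushf_mul]

lemma le_pushf_apply {p : E → ℝ} (hp : ∀ e, 0 ≤ p e) (g : E → A) (t : E) :
    p t ≤ pushf p g (g t) :=
  Finset.single_le_sum (fun e _ => hp e) (Finset.mem_filter.2 ⟨Finset.mem_univ t, rfl⟩)

lemma submod_core (p : (A × B × C) → ℝ) (hp0 : ∀ t, 0 ≤ p t) (hp1 : ∑ t, p t = 1) :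
    ent p + ent (pushf p (fun t => t.2.2)) ≤
      ent (pushf p (fun t => (t.1, t.2.2))) + ent (pushf p (fun t => (t.2.1, t.2.2))) := by
  classical
  set pXZ : A × C → ℝ := pushf p (fun t => (t.1, t.2.2)) with hpXZ
  set pYZ : B × C → ℝ := pushf p (fun t => (t.2.1, t.2.2)) with hpYZ
  set pZ : C → ℝ := pushf p (fun t => t.2.2) with hpZ
  have hXZ0 : ∀ x, 0 ≤ pXZ x := fun x => pushf_nonneg hp0 _ x
  have hYZ0 : ∀ x, 0 ≤ pYZ x := fun x => pushf_nonneg hp0 _ x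
  have hZ0 : ∀ x, 0 ≤ pZ x := fun x => pushf_nonneg hp0 _ x
  -- marginal identities
  have hmargX : ∀ c, ∑ x, pXZ (x, c) = pZ c := by
    intro c
    have h1 : pushf pXZ Prod.snd c = pZ c := by
      rw [hpXZ, ← pushf_comp]
    rw [← h1, pushf, Finset.sum_filter, Fintype.sum_prod_type]
    simp
  have hmargY : ∀ c, ∑ y, pYZ (y, c) = pZ c := by
    intro c
    have h1 : pushf pYZ Prod.snd c = pZ c := by
      rw [hpYZ, ← pushf_comp]
    rw [← h1, pushf, Finset.sum_filter, Fintype.sum_prod_type]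
    simp
  -- the auxiliary distribution
  set F : A × B × C → ℝ := fun t => pXZ (t.1, t.2.2) * pYZ (t.2.1, t.2.2) / pZ t.2.2 with hF
  have hF0 : ∀ t, 0 ≤ F t := fun t =>
    div_nonneg (mul_nonneg (hXZ0 _) (hYZ0 _)) (hZ0 _)
  have hFsum : ∑ t, F t = 1 := by
    rw [hF]
    rw [Fintype.sum_prod_type]
    have hswap : ∀ x : A, ∑ t : B × C, pXZ (x, t.2) * pYZ (t.1, t.2) / pZ t.2
        = ∑ z : C, ∑ y : B, pXZ (x, z) * pYZ (y, z) / pZ z := by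
      intro x
      rw [Fintype.sum_prod_type]
      exact Finset.sum_comm
    calc ∑ x : A, ∑ t : B × C, pXZ (x, t.2) * pYZ (t.1, t.2) / pZ t.2
        = ∑ x : A, ∑ z : C, ∑ y : B, pXZ (x, z) * pYZ (y, z) / pZ z :=
          Finset.sum_congr rfl fun x _ => hswap x
      _ = ∑ z : C, ∑ x : A, ∑ y : B, pXZ (x, z) * pYZ (y, z) / pZ z := Finset.sum_comm
      _ = ∑ z : C, pZ z := by
          refine Finset.sum_congr rfl fun z _ => ?_
          have : ∑ x : A, ∑ y : B, pXZ (x, z) * pYZ (y, z) / pZ z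
              = (∑ x : A, pXZ (x, z)) * (∑ y : B, pYZ (y, z)) / pZ z := by
            rw [Finset.sum_mul_sum, Finset.sum_div]
            refine Finset.sum_congr rfl fun x _ => ?_
            rw [Finset.sum_div]
          rw [this, hmargX, hmargY]
          by_cases hz : pZ z = 0
          · simp [hz]
          · field_simp
      _ = 1 := by rw [hpZ, sum_pushf, hp1]
  -- restrict to support
  set Ssupp : Finset (A × B × C) := Finset.univ.filter (fun t => 0 < p t) with hS
  have hzero : ∀ t, t ∉ Ssupp → p t = 0 := by
    intro t ht
    simp only [hS, Finset.mem_filter, Finset.mem_univ, true_and, not_lt] at ht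
    exact le_antisymm ht (hp0 t)
  have hrestrict : ∀ L : A × B × C → ℝ, ∑ t, p t * L t = ∑ t ∈ Ssupp, p t * L t := by
    intro L
    symm
    refine Finset.sum_subset (Finset.subset_univ _) fun t _ ht => ?_
    rw [hzero t ht, zero_mul]
  have hlog2 : (0 : ℝ) < Real.log 2 := Real.log_pos one_lt_two
  have hpoint : ∀ t ∈ Ssupp,
      p t * Real.logb 2 (pXZ (t.1, t.2.2)) + p t * Real.logb 2 (pYZ (t.2.1, t.2.2))
        - p t * Real.logb 2 (p t) - p t * Real.logb 2 (pZ t.2.2)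
      ≤ (F t - p t) / Real.log 2 := by
    intro t ht
    have hpt : 0 < p t := by
      simpa only [hS, Finset.mem_filter, Finset.mem_univ, true_and] using ht
    have h1 : p t ≤ pXZ (t.1, t.2.2) := le_pushf_apply hp0 (fun t => (t.1, t.2.2)) t
    have h2 : p t ≤ pYZ (t.2.1, t.2.2) := le_pushf_apply hp0 (fun t => (t.2.1, t.2.2)) t
    have h3 : p t ≤ pZ t.2.2 := le_pushf_apply hp0 (fun t => t.2.2) t
    have hx : 0 < pXZ (t.1, t.2.2) := lt_of_lt_of_le hpt h1
    have hy : 0 < pYZ (t.2.1, t.2.2) := lt_of_lt_of_le hpt h2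
    have hz : 0 < pZ t.2.2 := lt_of_lt_of_le hpt h3
    set R : ℝ := pXZ (t.1, t.2.2) * pYZ (t.2.1, t.2.2) / (p t * pZ t.2.2) with hR
    have hRpos : 0 < R := div_pos (mul_pos hx hy) (mul_pos hpt hz)
    have hlog : Real.log R ≤ R - 1 := Real.log_le_sub_one_of_pos hRpos
    have hcomb : Real.logb 2 (pXZ (t.1, t.2.2)) + Real.logb 2 (pYZ (t.2.1, t.2.2))
        - Real.logb 2 (p t) - Real.logb 2 (pZ t.2.2) = Real.log R / Real.log 2 := by
      simp only [Real.logb, hR]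
      rw [Real.log_div (ne_of_gt (mul_pos hx hy)) (ne_of_gt (mul_pos hpt hz)),
        Real.log_mul hx.ne' hy.ne', Real.log_mul hpt.ne' hz.ne']
      ring
    have hptR : p t * R = F t := by
      rw [hR, hF]
      field_simp
    calc p t * Real.logb 2 (pXZ (t.1, t.2.2)) + p t * Real.logb 2 (pYZ (t.2.1, t.2.2))
          - p t * Real.logb 2 (p t) - p t * Real.logb 2 (pZ t.2.2)
        = p t * (Real.log R / Real.log 2) := by rw [← hcomb]; ring
      _ ≤ p t * ((R - 1) / Real.log 2) := by
          apply mul_le_mul_of_nonneg_left _ hpt.le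
          exact div_le_div_of_nonneg_right hlog hlog2.le |>.trans_eq rfl
      _ = (p t * R - p t) / Real.log 2 := by ring
      _ = (F t - p t) / Real.log 2 := by rw [hptR]
  have key : ∑ t ∈ Ssupp, (p t * Real.logb 2 (pXZ (t.1, t.2.2))
        + p t * Real.logb 2 (pYZ (t.2.1, t.2.2))
        - p t * Real.logb 2 (p t) - p t * Real.logb 2 (pZ t.2.2)) ≤ 0 := by
    calc ∑ t ∈ Ssupp, (p t * Real.logb 2 (pXZ (t.1, t.2.2))
          + p t * Real.logb 2 (pYZ (t.2.1, t.2.2))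
          - p t * Real.logb 2 (p t) - p t * Real.logb 2 (pZ t.2.2))
        ≤ ∑ t ∈ Ssupp, (F t - p t) / Real.log 2 := Finset.sum_le_sum hpoint
      _ = ((∑ t ∈ Ssupp, F t) - ∑ t ∈ Ssupp, p t) / Real.log 2 := by
          rw [← Finset.sum_div, Finset.sum_sub_distrib]
      _ ≤ 0 := by
          have h1 : ∑ t ∈ Ssupp, F t ≤ 1 := by
            rw [← hFsum]
            exact Finset.sum_le_sum_of_subset_of_nonneg (Finset.subset_univ _)
              (fun t _ _ => hF0 t)
          have h2 : (∑ t ∈ Ssupp, p t) = 1 := by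
            rw [← hp1]
            exact Finset.sum_subset (Finset.subset_univ _) fun t _ ht => hzero t ht
          apply div_nonpos_of_nonpos_of_nonneg _ hlog2.le
          linarith
  -- convert the goal
  have eP : ent p = -∑ t, p t * Real.logb 2 (p t) := rfl
  have eXZ : ent pXZ = -∑ t : A × B × C, p t * Real.logb 2 (pXZ (t.1, t.2.2)) := by
    rw [hpXZ]; exact ent_pushf_eq_sum p _
  have eYZ : ent pYZ = -∑ t : A × B × C, p t * Real.logb 2 (pYZ (t.2.1, t.2.2)) := by
    rw [hpYZ]; exact ent_pushf_eq_sum p _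
  have eZ : ent pZ = -∑ t : A × B × C, p t * Real.logb 2 (pZ t.2.2) := by
    rw [hpZ]; exact ent_pushf_eq_sum p _
  rw [eP, eXZ, eYZ, eZ]
  have r1 : ∑ t : A × B × C, p t * Real.logb 2 (p t)
      = ∑ t ∈ Ssupp, p t * Real.logb 2 (p t) := hrestrict _
  have r2 : ∑ t : A × B × C, p t * Real.logb 2 (pXZ (t.1, t.2.2))
      = ∑ t ∈ Ssupp, p t * Real.logb 2 (pXZ (t.1, t.2.2)) := hrestrict _
  have r3 : ∑ t : A × B × C, p t * Real.logb 2 (pYZ (t.2.1, t.2.2))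
      = ∑ t ∈ Ssupp, p t * Real.logb 2 (pYZ (t.2.1, t.2.2)) := hrestrict _
  have r4 : ∑ t : A × B × C, p t * Real.logb 2 (pZ t.2.2)
      = ∑ t ∈ Ssupp, p t * Real.logb 2 (pZ t.2.2) := hrestrict _
  have split : ∑ t ∈ Ssupp, (p t * Real.logb 2 (pXZ (t.1, t.2.2))
        + p t * Real.logb 2 (pYZ (t.2.1, t.2.2))
        - p t * Real.logb 2 (p t) - p t * Real.logb 2 (pZ t.2.2))
      = ∑ t ∈ Ssupp, p t * Real.logb 2 (pXZ (t.1, t.2.2))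
        + ∑ t ∈ Ssupp, p t * Real.logb 2 (pYZ (t.2.1, t.2.2))
        - ∑ t ∈ Ssupp, p t * Real.logb 2 (p t)
        - ∑ t ∈ Ssupp, p t * Real.logb 2 (pZ t.2.2) := by
    rw [Finset.sum_sub_distrib, Finset.sum_sub_distrib, Finset.sum_add_distrib]
  rw [r1, r2, r3, r4]
  linarith [key, split]

end Submod

lemma entRV_submod {Ω A B C : Type*} [Fintype Ω] [Fintype A] [Fintype B] [Fintype C]
    (μ : Ω → ℝ) (hμ0 : ∀ ω, 0 ≤ μ ω)
    (hμ1 : ∑ ω, μ ω = 1) (X : Ω → A) (Yv : Ω → B) (Z : Ω → C) :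
    entRV μ (fun ω => (X ω, Yv ω, Z ω)) + entRV μ Z ≤
      entRV μ (fun ω => (X ω, Z ω)) + entRV μ (fun ω => (Yv ω, Z ω)) := by
  set p : A × B × C → ℝ := pushf μ (fun ω => (X ω, Yv ω, Z ω)) with hp
  have hp0 : ∀ t, 0 ≤ p t := fun t => pushf_nonneg hμ0 _ t
  have hp1 : ∑ t, p t = 1 := by rw [hp, sum_pushf, hμ1]
  have hcore := submod_core p hp0 hp1
  have e0 : entRV μ (fun ω => (X ω, Yv ω, Z ω)) = ent p := rfl
  have eZ : entRV μ Z = ent (pushf p (fun t => t.2.2)) := by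
    rw [entRV, hp]
    exact congrArg ent (pushf_comp μ (fun ω => (X ω, Yv ω, Z ω)) (fun t => t.2.2))
  have eXZ : entRV μ (fun ω => (X ω, Z ω)) = ent (pushf p (fun t => (t.1, t.2.2))) := by
    rw [entRV, hp]
    exact congrArg ent (pushf_comp μ (fun ω => (X ω, Yv ω, Z ω)) (fun t => (t.1, t.2.2)))
  have eYZ : entRV μ (fun ω => (Yv ω, Z ω)) = ent (pushf p (fun t => (t.2.1, t.2.2))) := by
    rw [entRV, hp]
    exact congrArg ent (pushf_comp μ (fun ω => (X ω, Yv ω, Z ω)) (fun t => (t.2.1, t.2.2)))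
  rw [e0, eZ, eXZ, eYZ]
  exact hcore

section Perm
variable {K : ℕ}

noncomputable def permOfFinsets (A B : Finset (Fin K)) (h : A.card = B.card) :
    Equiv.Perm (Fin K) :=
  (Equiv.sumCompl (· ∈ A)).symm.trans
    (((Finset.equivOfCardEq h).sumCongr
      (Fintype.equivOfCardEq (by
        have h1 : Fintype.card {i : Fin K // ¬ i ∈ A} = K - A.card := by
          rw [Fintype.card_subtype_compl]
          simp [Fintype.card_coe]
        have h2 : Fintype.card {i : Fin K // ¬ i ∈ B} = K - B.card := by
          rw [Fintype.card_subtype_compl]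
          simp [Fintype.card_coe]
        rw [h1, h2, h]))).trans
      (Equiv.sumCompl (· ∈ B)))

lemma permOfFinsets_apply (A B : Finset (Fin K)) (h : A.card = B.card)
    (a : Fin K) (ha : a ∈ A) :
    permOfFinsets A B h a = (Finset.equivOfCardEq h ⟨a, ha⟩ : Fin K) := by
  simp [permOfFinsets, Equiv.sumCompl_symm_apply_of_pos ha]

end Perm

section App
variable {Ω α β γ δ ε : Type*} [Fintype Ω] [Fintype α] [Fintype β] [Fintype γ] [Fintype δ]
  [Fintype ε] {K : ℕ}
variable (μ : Ω → ℝ) (S : Ω → β) (W : Ω → γ) (Y : Ω → δ) (U : Fin K → Ω → α)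

noncomputable def tEnt (Rf : β × γ × δ → ε) (A : Finset (Fin K)) : ℝ :=
  entRV μ (fun ω => ((fun a : {i : Fin K // i ∈ A} => U a.1 ω), Rf (S ω, W ω, Y ω)))

lemma exchange_entRV
    (hexch : ∀ σ : Equiv.Perm (Fin K),
      pushf μ (fun ω => (S ω, W ω, (fun i => U (σ i) ω), Y ω)) =
        pushf μ (fun ω => (S ω, W ω, (fun i => U i ω), Y ω)))
    (σ : Equiv.Perm (Fin K)) {E : Type*} [Fintype E]
    (G : β × γ × (Fin K → α) × δ → E) :
    entRV μ (fun ω => G (S ω, W ω, fun i => U (σ i) ω, Y ω)) =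
      entRV μ (fun ω => G (S ω, W ω, fun i => U i ω, Y ω)) := by
  have h1 : pushf μ (fun ω => G (S ω, W ω, fun i => U (σ i) ω, Y ω))
      = pushf (pushf μ (fun ω => (S ω, W ω, fun i => U (σ i) ω, Y ω))) G :=
    pushf_comp μ _ G
  have h2 : pushf μ (fun ω => G (S ω, W ω, fun i => U i ω, Y ω))
      = pushf (pushf μ (fun ω => (S ω, W ω, fun i => U i ω, Y ω))) G :=
    pushf_comp μ _ G
  rw [entRV, entRV, h1, h2, hexch σ]

lemma tEnt_exchange
    (hexch : ∀ σ : Equiv.Perm (Fin K),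
      pushf μ (fun ω => (S ω, W ω, (fun i => U (σ i) ω), Y ω)) =
        pushf μ (fun ω => (S ω, W ω, (fun i => U i ω), Y ω)))
    (Rf : β × γ × δ → ε) (A B : Finset (Fin K)) (hcard : A.card = B.card) :
    tEnt μ S W Y U Rf A = tEnt μ S W Y U Rf B := by
  classical
  set e : {i : Fin K // i ∈ A} ≃ {i : Fin K // i ∈ B} := Finset.equivOfCardEq hcard with he
  set σ : Equiv.Perm (Fin K) := permOfFinsets A B hcard with hσ
  have hkey := exchange_entRV μ S W Y U hexch σ
    (fun v : β × γ × (Fin K → α) × δ =>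
      ((fun a : {i : Fin K // i ∈ A} => v.2.2.1 a.1), Rf (v.1, v.2.1, v.2.2.2)))
  -- RHS of hkey is tEnt A
  have hRHS : entRV μ (fun ω =>
      ((fun a : {i : Fin K // i ∈ A} => U a.1 ω), Rf (S ω, W ω, Y ω)))
      = tEnt μ S W Y U Rf A := rfl
  -- LHS of hkey is tEnt B via relabelling
  set Φ : ({i : Fin K // i ∈ B} → α) × ε → ({i : Fin K // i ∈ A} → α) × ε :=
    fun vr => ((fun a => vr.1 (e a)), vr.2) with hΦ
  have hΦinj : Function.Injective Φ := by
    rintro ⟨v, r⟩ ⟨w, s⟩ hvw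
    simp only [hΦ, Prod.mk.injEq] at hvw
    obtain ⟨h1, h2⟩ := hvw
    refine Prod.ext ?_ h2
    funext b
    have := congrFun h1 (e.symm b)
    simpa using this
  have hLHS : entRV μ (fun ω =>
      ((fun a : {i : Fin K // i ∈ A} => U (σ a.1) ω), Rf (S ω, W ω, Y ω)))
      = tEnt μ S W Y U Rf B := by
    rw [tEnt]
    refine entRV_congr_inj μ hΦinj fun ω => ?_
    simp only [hΦ]
    refine Prod.ext ?_ rfl
    funext a
    have : σ a.1 = ((e a : {i : Fin K // i ∈ B}) : Fin K) := by
      rw [hσ, he]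
      exact permOfFinsets_apply A B hcard a.1 a.2
    simp [this]
  rw [← hRHS, ← hkey, hLHS]

lemma tEnt_submod (hμ0 : ∀ ω, 0 ≤ μ ω) (hμ1 : ∑ ω, μ ω = 1)
    (Rf : β × γ × δ → ε) {A B : Finset (Fin K)} (hAB : A ⊆ B)
    {k : Fin K} (hk : k ∉ B) :
    tEnt μ S W Y U Rf (insert k B) + tEnt μ S W Y U Rf A ≤
      tEnt μ S W Y U Rf (insert k A) + tEnt μ S W Y U Rf B := by
  classical
  have hsub := entRV_submod μ hμ0 hμ1 (fun ω => U k ω)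
    (fun ω => (fun j : {i : Fin K // i ∈ B \ A} => U j.1 ω))
    (fun ω => ((fun a : {i : Fin K // i ∈ A} => U a.1 ω), Rf (S ω, W ω, Y ω)))
  have eZ : entRV μ (fun ω => ((fun a : {i : Fin K // i ∈ A} => U a.1 ω),
      Rf (S ω, W ω, Y ω))) = tEnt μ S W Y U Rf A := rfl
  -- (X, Z) ↦ insert k A
  have eXZ : entRV μ (fun ω => (U k ω,
        ((fun a : {i : Fin K // i ∈ A} => U a.1 ω), Rf (S ω, W ω, Y ω))))
      = tEnt μ S W Y U Rf (insert k A) := by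
    rw [tEnt]
    have hinj : Function.Injective (fun vr : ({i : Fin K // i ∈ insert k A} → α) × ε =>
        (vr.1 ⟨k, Finset.mem_insert_self k A⟩,
          ((fun a : {i : Fin K // i ∈ A} => vr.1 ⟨a.1, Finset.mem_insert_of_mem a.2⟩),
            vr.2))) := by
      rintro ⟨v, r⟩ ⟨w, s⟩ hvw
      simp only [Prod.mk.injEq] at hvw
      obtain ⟨h1, h2, h3⟩ := hvw
      refine Prod.ext ?_ h3
      funext j
      obtain ⟨jv, hjv⟩ := j
      rcases Finset.mem_insert.mp hjv with rfl | hmem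
      · exact h1
      · exact congrFun h2 ⟨jv, hmem⟩
    exact entRV_congr_inj μ hinj fun ω => rfl
  -- (Yv, Z) ↦ B
  have eYZ : entRV μ (fun ω => ((fun j : {i : Fin K // i ∈ B \ A} => U j.1 ω),
        ((fun a : {i : Fin K // i ∈ A} => U a.1 ω), Rf (S ω, W ω, Y ω))))
      = tEnt μ S W Y U Rf B := by
    rw [tEnt]
    have hinj : Function.Injective (fun vr : ({i : Fin K // i ∈ B} → α) × ε =>
        ((fun j : {i : Fin K // i ∈ B \ A} => vr.1 ⟨j.1, (Finset.mem_sdiff.mp j.2).1⟩),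
          ((fun a : {i : Fin K // i ∈ A} => vr.1 ⟨a.1, hAB a.2⟩), vr.2))) := by
      rintro ⟨v, r⟩ ⟨w, s⟩ hvw
      simp only [Prod.mk.injEq] at hvw
      obtain ⟨h1, h2, h3⟩ := hvw
      refine Prod.ext ?_ h3
      funext j
      obtain ⟨jv, hjv⟩ := j
      by_cases hA : jv ∈ A
      · exact congrFun h2 ⟨jv, hA⟩
      · exact congrFun h1 ⟨jv, Finset.mem_sdiff.mpr ⟨hjv, hA⟩⟩
    exact entRV_congr_inj μ hinj fun ω => rfl
  -- (X, Yv, Z) ↦ insert k B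
  have eXYZ : entRV μ (fun ω => (U k ω,
        ((fun j : {i : Fin K // i ∈ B \ A} => U j.1 ω),
          ((fun a : {i : Fin K // i ∈ A} => U a.1 ω), Rf (S ω, W ω, Y ω)))))
      = tEnt μ S W Y U Rf (insert k B) := by
    rw [tEnt]
    have hinj : Function.Injective (fun vr : ({i : Fin K // i ∈ insert k B} → α) × ε =>
        (vr.1 ⟨k, Finset.mem_insert_self k B⟩,
          ((fun j : {i : Fin K // i ∈ B \ A} =>
              vr.1 ⟨j.1, Finset.mem_insert_of_mem (Finset.mem_sdiff.mp j.2).1⟩),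
            ((fun a : {i : Fin K // i ∈ A} =>
              vr.1 ⟨a.1, Finset.mem_insert_of_mem (hAB a.2)⟩), vr.2)))) := by
      rintro ⟨v, r⟩ ⟨w, s⟩ hvw
      simp only [Prod.mk.injEq] at hvw
      obtain ⟨h1, h2, h3, h4⟩ := hvw
      refine Prod.ext ?_ h4
      funext j
      obtain ⟨jv, hjv⟩ := j
      rcases Finset.mem_insert.mp hjv with rfl | hmem
      · exact h1
      · by_cases hA : jv ∈ A
        · exact congrFun h3 ⟨jv, hA⟩
        · exact congrFun h2 ⟨jv, Finset.mem_sdiff.mpr ⟨hmem, hA⟩⟩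
    exact entRV_congr_inj μ hinj fun ω => rfl
  rw [eZ, eXZ, eYZ, eXYZ] at hsub
  exact hsub

end App

section Chain
variable {K : ℕ}

def Iset (K m : ℕ) : Finset (Fin K) := Finset.univ.filter (fun i => (i : ℕ) < m)

lemma Iset_zero : Iset K 0 = ∅ := by
  ext i; simp [Iset]

lemma Iset_top : Iset K K = Finset.univ := by
  ext i; simp [Iset, i.2]

lemma Iset_succ {m : ℕ} (hm : m < K) :
    Iset K (m + 1) = insert (⟨m, hm⟩ : Fin K) (Iset K m) := by
  ext i
  simp only [Iset, Finset.mem_filter, Finset.mem_univ, true_and, Finset.mem_insert]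
  constructor
  · intro hi
    rcases Nat.lt_succ_iff_lt_or_eq.mp hi with hlt | heq
    · exact Or.inr hlt
    · exact Or.inl (Fin.ext heq)
  · rintro (rfl | hi)
    · exact Nat.lt_succ_self m
    · exact Nat.lt_succ_of_lt hi

lemma mem_Iset {m : ℕ} {i : Fin K} : i ∈ Iset K m ↔ (i : ℕ) < m := by
  simp [Iset]

lemma not_mem_Iset_self {m : ℕ} (hm : m < K) : (⟨m, hm⟩ : Fin K) ∉ Iset K m := by
  simp [mem_Iset]

lemma Iset_subset {m n : ℕ} (h : m ≤ n) : Iset K m ⊆ Iset K n := by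
  intro i hi
  rw [mem_Iset] at hi ⊢
  omega

lemma Iset_card {m : ℕ} (hm : m ≤ K) : (Iset K m).card = m := by
  induction m with
  | zero => simp [Iset_zero]
  | succ n ih =>
    have hn : n < K := hm
    rw [Iset_succ hn, Finset.card_insert_of_notMem (not_mem_Iset_self hn),
      ih (Nat.le_of_lt hn)]

end Chain

lemma han_seq (f : ℕ → ℝ) (K b : ℕ) (hbK : b ≤ K)
    (hconc : ∀ m j, m ≤ j → j + 1 ≤ K → f (j + 1) - f j ≤ f (m + 1) - f m) :
    (b : ℝ) * (f K - f 0) ≤ (K : ℝ) * (f b - f 0) := by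
  rcases Nat.eq_zero_or_pos b with rfl | hb
  · simp
  set d : ℕ → ℝ := fun m => f (m + 1) - f m with hd
  have hsum : ∀ n, ∑ m ∈ Finset.range n, d m = f n - f 0 := fun n =>
    Finset.sum_range_sub f n
  have hb1 : b - 1 + 1 = b := Nat.succ_pred_eq_of_pos hb
  have hp1 : (b : ℝ) * d (b - 1) ≤ ∑ m ∈ Finset.range b, d m := by
    calc (b : ℝ) * d (b - 1) = ∑ _m ∈ Finset.range b, d (b - 1) := by
          rw [Finset.sum_const, Finset.card_range, nsmul_eq_mul]
      _ ≤ ∑ m ∈ Finset.range b, d m := by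
          refine Finset.sum_le_sum fun m hm => ?_
          have hm' : m ≤ b - 1 := by
            have := Finset.mem_range.mp hm; omega
          have := hconc m (b - 1) hm' (by omega)
          simpa [hd, hb1] using this
  have hp2 : ∑ m ∈ Finset.Ico b K, d m ≤ ((K : ℝ) - b) * d (b - 1) := by
    calc ∑ m ∈ Finset.Ico b K, d m ≤ ∑ _m ∈ Finset.Ico b K, d (b - 1) := by
          refine Finset.sum_le_sum fun m hm => ?_
          obtain ⟨hm1, hm2⟩ := Finset.mem_Ico.mp hm
          have := hconc (b - 1) m (by omega) (by omega)
          simpa [hd, hb1] using this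
      _ = ((K : ℝ) - b) * d (b - 1) := by
          rw [Finset.sum_const, Nat.card_Ico, nsmul_eq_mul]
          congr 1
          have : (K - b : ℕ) = (K : ℝ) - (b : ℝ) := by
            rw [Nat.cast_sub hbK]
          rw [this]
  have htot : ∑ m ∈ Finset.range b, d m + ∑ m ∈ Finset.Ico b K, d m
      = ∑ m ∈ Finset.range K, d m := Finset.sum_range_add_sum_Ico d hbK
  have hKb : (0 : ℝ) ≤ (K : ℝ) - b := by
    have : (b : ℝ) ≤ K := Nat.cast_le.mpr hbK
    linarith
  have hb0 : (0 : ℝ) ≤ b := Nat.cast_nonneg b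
  have key : (b : ℝ) * (∑ m ∈ Finset.range b, d m + ∑ m ∈ Finset.Ico b K, d m)
      ≤ (K : ℝ) * ∑ m ∈ Finset.range b, d m := by
    have h1 : ((K : ℝ) - b) * ((b : ℝ) * d (b - 1)) ≤ ((K : ℝ) - b) * ∑ m ∈ Finset.range b, d m :=
      mul_le_mul_of_nonneg_left hp1 hKb
    have h2 : (b : ℝ) * ∑ m ∈ Finset.Ico b K, d m ≤ (b : ℝ) * (((K : ℝ) - b) * d (b - 1)) :=
      mul_le_mul_of_nonneg_left hp2 hb0
    nlinarith [h1, h2]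
  rw [htot, hsum K, hsum b] at key
  exact key

section App2
variable {Ω α β γ δ ε : Type*} [Fintype Ω] [Fintype α] [Fintype β] [Fintype γ] [Fintype δ]
  [Fintype ε] {K : ℕ}
variable (μ : Ω → ℝ) (S : Ω → β) (W : Ω → γ) (Y : Ω → δ) (U : Fin K → Ω → α)

lemma tEnt_step (hμ0 : ∀ ω, 0 ≤ μ ω) (hμ1 : ∑ ω, μ ω = 1)
    (hexch : ∀ σ : Equiv.Perm (Fin K),
      pushf μ (fun ω => (S ω, W ω, (fun i => U (σ i) ω), Y ω)) =
        pushf μ (fun ω => (S ω, W ω, (fun i => U i ω), Y ω)))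
    (Rf : β × γ × δ → ε) {m : ℕ} (hm : m + 2 ≤ K) :
    tEnt μ S W Y U Rf (Iset K (m + 2)) - tEnt μ S W Y U Rf (Iset K (m + 1)) ≤
      tEnt μ S W Y U Rf (Iset K (m + 1)) - tEnt μ S W Y U Rf (Iset K m) := by
  have hm1 : m + 1 < K := hm
  set k : Fin K := ⟨m + 1, hm1⟩ with hkdef
  have hkB : k ∉ Iset K (m + 1) := by simp [mem_Iset, hkdef]
  have hkA : k ∉ Iset K m := by simp [mem_Iset, hkdef]
  have hAB : Iset K m ⊆ Iset K (m + 1) := Iset_subset (Nat.le_succ m)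
  have hsub := tEnt_submod μ S W Y U hμ0 hμ1 Rf hAB hkB
  have h1 : insert k (Iset K (m + 1)) = Iset K (m + 2) := (Iset_succ hm1).symm
  have h2 : tEnt μ S W Y U Rf (insert k (Iset K m)) = tEnt μ S W Y U Rf (Iset K (m + 1)) := by
    apply tEnt_exchange μ S W Y U hexch Rf
    rw [Finset.card_insert_of_notMem hkA, Iset_card (by omega), Iset_card (by omega)]
  rw [h1, h2] at hsub
  linarith

lemma tEnt_d_antitone (hμ0 : ∀ ω, 0 ≤ μ ω) (hμ1 : ∑ ω, μ ω = 1)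
    (hexch : ∀ σ : Equiv.Perm (Fin K),
      pushf μ (fun ω => (S ω, W ω, (fun i => U (σ i) ω), Y ω)) =
        pushf μ (fun ω => (S ω, W ω, (fun i => U i ω), Y ω)))
    (Rf : β × γ × δ → ε) :
    ∀ m j : ℕ, m ≤ j → j + 1 ≤ K →
      tEnt μ S W Y U Rf (Iset K (j + 1)) - tEnt μ S W Y U Rf (Iset K j) ≤
        tEnt μ S W Y U Rf (Iset K (m + 1)) - tEnt μ S W Y U Rf (Iset K m) := by
  intro m j
  induction j with
  | zero => intro hm _; interval_cases m; exact le_refl _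
  | succ n ih =>
    intro hm hn
    rcases Nat.lt_or_ge m (n + 1) with hlt | hge
    · have hstep := tEnt_step μ S W Y U hμ0 hμ1 hexch Rf (m := n) (by omega)
      have := ih (by omega) (by omega)
      linarith
    · have : m = n + 1 := by omega
      subst this
      exact le_refl _

lemma tEnt_han (hμ0 : ∀ ω, 0 ≤ μ ω) (hμ1 : ∑ ω, μ ω = 1)
    (hexch : ∀ σ : Equiv.Perm (Fin K),
      pushf μ (fun ω => (S ω, W ω, (fun i => U (σ i) ω), Y ω)) =
        pushf μ (fun ω => (S ω, W ω, (fun i => U i ω), Y ω)))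
    (Rf : β × γ × δ → ε) {b : ℕ} (hbK : b ≤ K) :
    (b : ℝ) * (tEnt μ S W Y U Rf Finset.univ - tEnt μ S W Y U Rf ∅) ≤
      (K : ℝ) * (tEnt μ S W Y U Rf (Iset K b) - tEnt μ S W Y U Rf ∅) := by
  have h := han_seq (fun m => tEnt μ S W Y U Rf (Iset K m)) K b hbK
    (tEnt_d_antitone μ S W Y U hμ0 hμ1 hexch Rf)
  rw [Iset_top, Iset_zero] at h
  exact h

end App2

/-- Under an exchangeable (in the `K` indices of `U`) joint distribution of
`(S, W, U_1, …, U_K, Y)`, for every nonempty `A ⊆ {1,…,K}`: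
`(1/|A|)·I(U_A; Y, U_{K∖A} | S, W) ≥ (1/K)·I(U_{1..K}; Y | S, W)`. -/
theorem normalized_cmi_ge_of_exchangeable {Ω α β γ δ : Type*} [Fintype Ω]
    [Fintype α] [Fintype β] [Fintype γ] [Fintype δ]
    (μ : Ω → ℝ) (hμ : IsPMF μ) {K : ℕ} (hK : 0 < K)
    (S : Ω → β) (W : Ω → γ) (Y : Ω → δ) (U : Fin K → Ω → α)
    (hexch : ∀ σ : Equiv.Perm (Fin K),
      pushf μ (fun ω => (S ω, W ω, (fun i => U (σ i) ω), Y ω)) =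
        pushf μ (fun ω => (S ω, W ω, (fun i => U i ω), Y ω))) :
    ∀ A : Finset (Fin K), A.Nonempty →
      (1 / (K : ℝ)) * cmi μ (fun ω => (fun i => U i ω)) Y (fun ω => (S ω, W ω)) ≤
        (1 / (A.card : ℝ)) *
          cmi μ (fun ω => (fun a : {i : Fin K // i ∈ A} => U a.1 ω))
            (fun ω => (Y ω, (fun a : {i : Fin K // i ∉ A} => U a.1 ω)))
            (fun ω => (S ω, W ω)) := by
  classical
  obtain ⟨hμ0, hμ1⟩ := hμ
  intro A hAne
  set Rsw : β × γ × δ → β × γ := fun v => (v.1, v.2.1) with hRsw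
  set Rid : β × γ × δ → β × γ × δ := fun v => v with hRid
  set HU : Finset (Fin K) → ℝ := tEnt μ S W Y U Rsw with hHU
  set TU : Finset (Fin K) → ℝ := tEnt μ S W Y U Rid with hTU
  have haK : A.card ≤ K := by
    have := Finset.card_le_univ A
    simpa using this
  have hapos : 0 < A.card := Finset.Nonempty.card_pos hAne
  -- identifications of goal entropies
  have hE1 : entRV μ (fun ω => ((fun i => U i ω), (S ω, W ω))) = HU Finset.univ := by
    rw [hHU]
    have hinj : Function.Injective
        (fun vr : ({i : Fin K // i ∈ (Finset.univ : Finset (Fin K))} → α) × (β × γ) =>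
          ((fun i : Fin K => vr.1 ⟨i, Finset.mem_univ i⟩), vr.2)) := by
      rintro ⟨v, r⟩ ⟨w, s⟩ hvw
      simp only [Prod.mk.injEq] at hvw
      obtain ⟨h1, h2⟩ := hvw
      refine Prod.ext ?_ h2
      funext j
      exact congrFun h1 j.1
    exact entRV_congr_inj μ hinj fun ω => rfl
  have hE2 : entRV μ (fun ω => (Y ω, (S ω, W ω))) = TU ∅ := by
    rw [hTU]
    have hinj : Function.Injective
        (fun vr : ({i : Fin K // i ∈ (∅ : Finset (Fin K))} → α) × (β × γ × δ) =>
          (vr.2.2.2, (vr.2.1, vr.2.2.1))) := by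
      rintro ⟨v, r⟩ ⟨w, s⟩ hvw
      simp only [Prod.mk.injEq] at hvw
      obtain ⟨h1, h2, h3⟩ := hvw
      have hr : r = s := by
        obtain ⟨r1, r2, r3⟩ := r; obtain ⟨s1, s2, s3⟩ := s
        simp_all
      refine Prod.ext ?_ hr
      funext j
      exact absurd j.2 (Finset.notMem_empty j.1)
    exact entRV_congr_inj μ hinj fun ω => rfl
  have hE3 : entRV μ (fun ω => (((fun i => U i ω), Y ω), (S ω, W ω))) = TU Finset.univ := by
    rw [hTU]
    have hinj : Function.Injective
        (fun vr : ({i : Fin K // i ∈ (Finset.univ : Finset (Fin K))} → α) × (β × γ × δ) =>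
          (((fun i : Fin K => vr.1 ⟨i, Finset.mem_univ i⟩), vr.2.2.2), (vr.2.1, vr.2.2.1))) := by
      rintro ⟨v, r⟩ ⟨w, s⟩ hvw
      simp only [Prod.mk.injEq] at hvw
      obtain ⟨⟨h1, h4⟩, h2, h3⟩ := hvw
      have hr : r = s := by
        obtain ⟨r1, r2, r3⟩ := r; obtain ⟨s1, s2, s3⟩ := s
        simp_all
      refine Prod.ext ?_ hr
      funext j
      exact congrFun h1 j.1
    exact entRV_congr_inj μ hinj fun ω => rfl
  have hE4 : entRV μ (fun ω => (S ω, W ω)) = HU ∅ := by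
    rw [hHU]
    have hinj : Function.Injective
        (fun vr : ({i : Fin K // i ∈ (∅ : Finset (Fin K))} → α) × (β × γ) =>
          vr.2) := by
      rintro ⟨v, r⟩ ⟨w, s⟩ hvw
      simp only at hvw
      refine Prod.ext ?_ hvw
      funext j
      exact absurd j.2 (Finset.notMem_empty j.1)
    exact entRV_congr_inj μ hinj fun ω => rfl
  have hF1 : entRV μ (fun ω => ((fun a : {i : Fin K // i ∈ A} => U a.1 ω), (S ω, W ω)))
      = HU A := rfl
  have hF2 : entRV μ (fun ω => ((Y ω, (fun a : {i : Fin K // i ∉ A} => U a.1 ω)), (S ω, W ω)))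
      = TU Aᶜ := by
    rw [hTU]
    have hinj : Function.Injective
        (fun vr : ({i : Fin K // i ∈ Aᶜ} → α) × (β × γ × δ) =>
          ((vr.2.2.2, (fun a : {i : Fin K // i ∉ A} =>
              vr.1 ⟨a.1, Finset.mem_compl.mpr a.2⟩)), (vr.2.1, vr.2.2.1))) := by
      rintro ⟨v, r⟩ ⟨w, s⟩ hvw
      simp only [Prod.mk.injEq] at hvw
      obtain ⟨⟨h4, h1⟩, h2, h3⟩ := hvw
      have hr : r = s := by
        obtain ⟨r1, r2, r3⟩ := r; obtain ⟨s1, s2, s3⟩ := s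
        simp_all
      refine Prod.ext ?_ hr
      funext j
      exact congrFun h1 ⟨j.1, Finset.mem_compl.mp j.2⟩
    exact entRV_congr_inj μ hinj fun ω => rfl
  have hF3 : entRV μ (fun ω => (((fun a : {i : Fin K // i ∈ A} => U a.1 ω),
        (Y ω, (fun a : {i : Fin K // i ∉ A} => U a.1 ω))), (S ω, W ω)))
      = TU Finset.univ := by
    rw [hTU]
    have hinj : Function.Injective
        (fun vr : ({i : Fin K // i ∈ (Finset.univ : Finset (Fin K))} → α) × (β × γ × δ) =>
          (((fun a : {i : Fin K // i ∈ A} => vr.1 ⟨a.1, Finset.mem_univ a.1⟩),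
            (vr.2.2.2, (fun a : {i : Fin K // i ∉ A} => vr.1 ⟨a.1, Finset.mem_univ a.1⟩))),
            (vr.2.1, vr.2.2.1))) := by
      rintro ⟨v, r⟩ ⟨w, s⟩ hvw
      simp only [Prod.mk.injEq] at hvw
      obtain ⟨⟨h1, h4, h5⟩, h2, h3⟩ := hvw
      have hr : r = s := by
        obtain ⟨r1, r2, r3⟩ := r; obtain ⟨s1, s2, s3⟩ := s
        simp_all
      refine Prod.ext ?_ hr
      funext j
      by_cases hA : j.1 ∈ A
      · exact congrFun h1 ⟨j.1, hA⟩
      · exact congrFun h5 ⟨j.1, hA⟩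
    exact entRV_congr_inj μ hinj fun ω => rfl
  -- Han inequalities
  have hHanH := tEnt_han μ S W Y U hμ0 hμ1 hexch Rsw haK
  have hHanT := tEnt_han μ S W Y U hμ0 hμ1 hexch Rid (Nat.sub_le K A.card)
  have hHUA : tEnt μ S W Y U Rsw (Iset K A.card) = HU A := by
    rw [hHU]
    exact tEnt_exchange μ S W Y U hexch Rsw _ _ (by rw [Iset_card haK])
  have hTUc : tEnt μ S W Y U Rid (Iset K (K - A.card)) = TU Aᶜ := by
    rw [hTU]
    refine tEnt_exchange μ S W Y U hexch Rid _ _ ?_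
    rw [Iset_card (Nat.sub_le K A.card), Finset.card_compl]
    simp
  rw [hHUA] at hHanH
  rw [hTUc] at hHanT
  -- final algebra
  have hcast : ((K - A.card : ℕ) : ℝ) = (K : ℝ) - (A.card : ℝ) := by
    rw [Nat.cast_sub haK]
  rw [hcast] at hHanT
  have hKpos : (0 : ℝ) < K := Nat.cast_pos.mpr hK
  have hapos' : (0 : ℝ) < A.card := Nat.cast_pos.mpr hapos
  have eg1 : cmi μ (fun ω => (fun i => U i ω)) Y (fun ω => (S ω, W ω))
      = (entRV μ (fun ω => ((fun i => U i ω), (S ω, W ω)))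
          - entRV μ (fun ω => (S ω, W ω)))
        + (entRV μ (fun ω => (Y ω, (S ω, W ω))) - entRV μ (fun ω => (S ω, W ω)))
        - (entRV μ (fun ω => (((fun i => U i ω), Y ω), (S ω, W ω)))
          - entRV μ (fun ω => (S ω, W ω))) := rfl
  have eg2 : cmi μ (fun ω => (fun a : {i : Fin K // i ∈ A} => U a.1 ω))
        (fun ω => (Y ω, (fun a : {i : Fin K // i ∉ A} => U a.1 ω)))
        (fun ω => (S ω, W ω))
      = (entRV μ (fun ω => ((fun a : {i : Fin K // i ∈ A} => U a.1 ω), (S ω, W ω)))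
          - entRV μ (fun ω => (S ω, W ω)))
        + (entRV μ (fun ω => ((Y ω, (fun a : {i : Fin K // i ∉ A} => U a.1 ω)), (S ω, W ω)))
          - entRV μ (fun ω => (S ω, W ω)))
        - (entRV μ (fun ω => (((fun a : {i : Fin K // i ∈ A} => U a.1 ω),
            (Y ω, (fun a : {i : Fin K // i ∉ A} => U a.1 ω))), (S ω, W ω)))
          - entRV μ (fun ω => (S ω, W ω))) := rfl
  rw [eg1, eg2]
  rw [hE1, hE2, hE3, hE4, hF1, hF2, hF3]
  rw [div_mul_eq_mul_div, div_mul_eq_mul_div, div_le_div_iff₀ hKpos hapos']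
  have h1 : HU Finset.univ - HU ∅ ≥ 0 ∨ True := Or.inr trivial
  nlinarith [hHanH, hHanT, hKpos, hapos']
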